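/- Let (a_1,…,a_n) be a permutation of [n] with n ≥ 1, and let N be the maximum length of an increasing-first 1-modal subsequence (an increasing-then-decreasing subsequence) of (a_1,…,a_n). Then 2n ≤ N(N+1). -/

import Mathlib

/-- `b : Fin m → ℤ` is an increasing-first `k`-modal sequence: it can be cut into at most
`k + 1` segments, alternately strictly increasing and strictly decreasing, starting with an
increasing segment (segments may be degenerate). Sequences of length at most 1 always qualify. -/
def IncFirstModal (k : ℕ) {m : ℕ} (b : Fin m → ℤ) : Prop :=
  ∃ j : ℕ → ℕ, Monotone j ∧ j 0 = 0 ∧ m - 1 ≤ j (k + 1) ∧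
    ∀ ℓ s, ℓ ≤ k → j ℓ ≤ s → s + 1 ≤ j (ℓ + 1) →
      ∀ (hs : s < m) (hs1 : s + 1 < m),
        if Even ℓ then b ⟨s, hs⟩ < b ⟨s + 1, hs1⟩ else b ⟨s + 1, hs1⟩ < b ⟨s, hs⟩

/-- `b : Fin m → ℤ` is a decreasing-first `k`-modal sequence: at most `k + 1` alternately
strictly decreasing and strictly increasing segments, starting with a decreasing segment. -/
def DecFirstModal (k : ℕ) {m : ℕ} (b : Fin m → ℤ) : Prop :=
  ∃ j : ℕ → ℕ, Monotone j ∧ j 0 = 0 ∧ m - 1 ≤ j (k + 1) ∧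
    ∀ ℓ s, ℓ ≤ k → j ℓ ≤ s → s + 1 ≤ j (ℓ + 1) →
      ∀ (hs : s < m) (hs1 : s + 1 < m),
        if Even ℓ then b ⟨s + 1, hs1⟩ < b ⟨s, hs⟩ else b ⟨s, hs⟩ < b ⟨s + 1, hs1⟩

/-- `a : Fin n → ℤ` is a permutation of `[n] = {1, …, n}`. -/
def IsPermOn (n : ℕ) (a : Fin n → ℤ) : Prop :=
  Function.Injective a ∧ ∀ i, 1 ≤ a i ∧ a i ≤ (n : ℤ)

/-- The subsequence selected by the strictly monotone index map `s` ends at position `i`. -/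
def EndsAt {n L : ℕ} (s : Fin L → Fin n) (i : Fin n) : Prop :=
  ∃ h : 0 < L, s ⟨L - 1, Nat.sub_lt h Nat.one_pos⟩ = i

/-- The subsequence selected by the strictly monotone index map `s` starts at position `i`. -/
def StartsAt {n L : ℕ} (s : Fin L → Fin n) (i : Fin n) : Prop :=
  ∃ h : 0 < L, s ⟨0, h⟩ = i

def IncSet {n : ℕ} (a : Fin n → ℤ) (i : Fin n) : Set ℕ :=
  {L | ∃ s : Fin L → Fin n, StrictMono s ∧ StrictMono (a ∘ s) ∧ EndsAt s i}

def DecSet {n : ℕ} (a : Fin n → ℤ) (i : Fin n) : Set ℕ :=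
  {L | ∃ s : Fin L → Fin n, StrictMono s ∧ StrictAnti (a ∘ s) ∧ StartsAt s i}

lemma one_mem_IncSet {n : ℕ} (a : Fin n → ℤ) (i : Fin n) : 1 ∈ IncSet a i :=
  ⟨fun _ => i, Subsingleton.strictMono _, Subsingleton.strictMono _, ⟨Nat.one_pos, rfl⟩⟩

lemma one_mem_DecSet {n : ℕ} (a : Fin n → ℤ) (i : Fin n) : 1 ∈ DecSet a i :=
  ⟨fun _ => i, Subsingleton.strictMono _, Subsingleton.strictAnti _, ⟨Nat.one_pos, rfl⟩⟩

lemma bddAbove_IncSet {n : ℕ} (a : Fin n → ℤ) (i : Fin n) : BddAbove (IncSet a i) := by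
  refine ⟨n, fun L hL => ?_⟩
  obtain ⟨s, hs, -, -⟩ := hL
  simpa using Fintype.card_le_of_injective s hs.injective

lemma bddAbove_DecSet {n : ℕ} (a : Fin n → ℤ) (i : Fin n) : BddAbove (DecSet a i) := by
  refine ⟨n, fun L hL => ?_⟩
  obtain ⟨s, hs, -, -⟩ := hL
  simpa using Fintype.card_le_of_injective s hs.injective

noncomputable def fval {n : ℕ} (a : Fin n → ℤ) (i : Fin n) : ℕ := sSup (IncSet a i)
noncomputable def gval {n : ℕ} (a : Fin n → ℤ) (i : Fin n) : ℕ := sSup (DecSet a i)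

lemma fval_mem {n : ℕ} (a : Fin n → ℤ) (i : Fin n) : fval a i ∈ IncSet a i :=
  Nat.sSup_mem ⟨1, one_mem_IncSet a i⟩ (bddAbove_IncSet a i)

lemma gval_mem {n : ℕ} (a : Fin n → ℤ) (i : Fin n) : gval a i ∈ DecSet a i :=
  Nat.sSup_mem ⟨1, one_mem_DecSet a i⟩ (bddAbove_DecSet a i)

lemma one_le_fval {n : ℕ} (a : Fin n → ℤ) (i : Fin n) : 1 ≤ fval a i :=
  le_csSup (bddAbove_IncSet a i) (one_mem_IncSet a i)

lemma one_le_gval {n : ℕ} (a : Fin n → ℤ) (i : Fin n) : 1 ≤ gval a i :=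
  le_csSup (bddAbove_DecSet a i) (one_mem_DecSet a i)

lemma inc_extend {n : ℕ} (a : Fin n → ℤ) {i j : Fin n} (hij : i < j) (hija : a i < a j) :
    fval a i + 1 ≤ fval a j := by
  obtain ⟨s, hs, has, hL, hend⟩ := fval_mem a i
  have hsk : ∀ k : Fin (fval a i), s k ≤ i := by
    intro k
    rw [← hend, ← Fin.eta k k.isLt]
    refine hs.monotone ?_
    refine Fin.mk_le_mk.mpr ?_
    have := k.isLt; omega
  have hask : ∀ k : Fin (fval a i), a (s k) ≤ a i := by
    intro k
    rw [← hend, ← Fin.eta k k.isLt]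
    refine has.monotone ?_
    refine Fin.mk_le_mk.mpr ?_
    have := k.isLt; omega
  set s' : Fin (fval a i + 1) → Fin n :=
    fun k => if h : (k : ℕ) < fval a i then s ⟨k, h⟩ else j with hs'def
  have hval : ∀ (k : Fin (fval a i + 1)) (h : (k : ℕ) < fval a i), s' k = s ⟨k, h⟩ := by
    intro k h; simp [hs'def, h]
  have hvalj : ∀ (k : Fin (fval a i + 1)), ¬ (k : ℕ) < fval a i → s' k = j := by
    intro k h; simp [hs'def, h]
  have hmono : StrictMono s' := by
    intro x y hxy
    have hxy' : (x : ℕ) < (y : ℕ) := hxy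
    rcases lt_or_ge (y : ℕ) (fval a i) with hy | hy
    · have hx : (x : ℕ) < fval a i := lt_trans hxy' hy
      rw [hval x hx, hval y hy]
      exact hs (Fin.mk_lt_mk.mpr hxy' : (⟨(x:ℕ), hx⟩ : Fin (fval a i)) < ⟨(y:ℕ), hy⟩)
    · rw [hvalj y (by omega)]
      rcases lt_or_ge (x : ℕ) (fval a i) with hx | hx
      · rw [hval x hx]
        exact lt_of_le_of_lt (hsk _) hij
      · exfalso; have := x.isLt; have := y.isLt; omega
  have hamono : StrictMono (a ∘ s') := by
    intro x y hxy
    have hxy' : (x : ℕ) < (y : ℕ) := hxy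
    simp only [Function.comp_apply]
    rcases lt_or_ge (y : ℕ) (fval a i) with hy | hy
    · have hx : (x : ℕ) < fval a i := lt_trans hxy' hy
      rw [hval x hx, hval y hy]
      exact has (Fin.mk_lt_mk.mpr hxy' : (⟨(x:ℕ), hx⟩ : Fin (fval a i)) < ⟨(y:ℕ), hy⟩)
    · rw [hvalj y (by omega)]
      rcases lt_or_ge (x : ℕ) (fval a i) with hx | hx
      · rw [hval x hx]
        exact lt_of_le_of_lt (hask _) hija
      · exfalso; have := y.isLt; omega
  have hmem : fval a i + 1 ∈ IncSet a j := by
    refine ⟨s', hmono, hamono, Nat.succ_pos _, ?_⟩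
    exact hvalj _ (by simp)
  exact le_csSup (bddAbove_IncSet a j) hmem

lemma dec_extend {n : ℕ} (a : Fin n → ℤ) {i j : Fin n} (hij : i < j) (hija : a j < a i) :
    gval a j + 1 ≤ gval a i := by
  obtain ⟨t, ht, hat, hL, hstart⟩ := gval_mem a j
  have htk : ∀ k : Fin (gval a j), j ≤ t k := by
    intro k
    rw [← hstart, ← Fin.eta k k.isLt]
    refine ht.monotone ?_
    exact Fin.mk_le_mk.mpr (Nat.zero_le _)
  have hatk : ∀ k : Fin (gval a j), a (t k) ≤ a j := by
    intro k
    rw [← hstart, ← Fin.eta k k.isLt]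
    refine hat.antitone ?_
    exact Fin.mk_le_mk.mpr (Nat.zero_le _)
  set t' : Fin (gval a j + 1) → Fin n := Fin.cases i t with ht'def
  have hmono : StrictMono t' := by
    intro x y hxy
    rcases Fin.eq_zero_or_eq_succ y with rfl | ⟨y', rfl⟩
    · exact absurd hxy (by simp)
    · rcases Fin.eq_zero_or_eq_succ x with rfl | ⟨x', rfl⟩
      · simp only [ht'def, Fin.cases_zero, Fin.cases_succ]
        exact lt_of_lt_of_le hij (htk y')
      · simp only [ht'def, Fin.cases_succ]
        exact ht (Fin.succ_lt_succ_iff.mp hxy)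
  have hamono : StrictAnti (a ∘ t') := by
    intro x y hxy
    rcases Fin.eq_zero_or_eq_succ y with rfl | ⟨y', rfl⟩
    · exact absurd hxy (by simp)
    · rcases Fin.eq_zero_or_eq_succ x with rfl | ⟨x', rfl⟩
      · simp only [Function.comp_apply, ht'def, Fin.cases_zero, Fin.cases_succ]
        exact lt_of_le_of_lt (hatk y') hija
      · simp only [Function.comp_apply, ht'def, Fin.cases_succ]
        exact hat (Fin.succ_lt_succ_iff.mp hxy)
  have hmem : gval a j + 1 ∈ DecSet a i := by
    refine ⟨t', hmono, hamono, Nat.succ_pos _, ?_⟩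
    simp [ht'def]
  exact le_csSup (bddAbove_DecSet a i) hmem

lemma combine {n : ℕ} (a : Fin n → ℤ) (i : Fin n) :
    ∃ s : Fin (fval a i + gval a i - 1) → Fin n, StrictMono s ∧ IncFirstModal 1 (a ∘ s) := by
  obtain ⟨s, hs, has, hp, hend⟩ := fval_mem a i
  obtain ⟨t, ht, hat, hq, hstart⟩ := gval_mem a i
  have hp1 : 1 ≤ fval a i := one_le_fval a i
  have hq1 : 1 ≤ gval a i := one_le_gval a i
  have hm : fval a i + gval a i - 1 = fval a i + (gval a i - 1) := by omega
  rw [hm]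
  -- abbreviations
  have hsk : ∀ k : Fin (fval a i), s k ≤ i := by
    intro k
    rw [← hend, ← Fin.eta k k.isLt]
    exact hs.monotone (Fin.mk_le_mk.mpr (by have := k.isLt; omega))
  have hask : ∀ k : Fin (fval a i), a (s k) ≤ a i := by
    intro k
    rw [← hend, ← Fin.eta k k.isLt]
    exact has.monotone (Fin.mk_le_mk.mpr (by have := k.isLt; omega))
  have htk : ∀ k : Fin (gval a i), i ≤ t k := by
    intro k
    rw [← hstart, ← Fin.eta k k.isLt]
    exact ht.monotone (Fin.mk_le_mk.mpr (Nat.zero_le _))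
  set u : Fin (fval a i + (gval a i - 1)) → Fin n :=
    fun k => if h : (k : ℕ) < fval a i then s ⟨k, h⟩
      else t ⟨(k : ℕ) - fval a i + 1, by have := k.isLt; omega⟩ with hudef
  have huval : ∀ (k : Fin (fval a i + (gval a i - 1))) (h : (k : ℕ) < fval a i),
      u k = s ⟨k, h⟩ := by intro k h; simp [hudef, h]
  have huval2 : ∀ (k : Fin (fval a i + (gval a i - 1))) (h : ¬ (k : ℕ) < fval a i),
      u k = t ⟨(k : ℕ) - fval a i + 1, by have := k.isLt; omega⟩ := by
    intro k h; simp [hudef, h]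
  have hmono : StrictMono u := by
    intro x y hxy
    have hxy' : (x : ℕ) < (y : ℕ) := hxy
    rcases lt_or_ge (y : ℕ) (fval a i) with hy | hy
    · have hx : (x : ℕ) < fval a i := lt_trans hxy' hy
      rw [huval x hx, huval y hy]
      exact hs (Fin.mk_lt_mk.mpr hxy' : (⟨(x:ℕ), hx⟩ : Fin (fval a i)) < ⟨(y:ℕ), hy⟩)
    · rw [huval2 y (by omega)]
      rcases lt_or_ge (x : ℕ) (fval a i) with hx | hx
      · rw [huval x hx]
        calc s ⟨(x:ℕ), hx⟩ ≤ i := hsk _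
          _ ≤ t ⟨(y:ℕ) - fval a i, by have := y.isLt; omega⟩ := htk _
          _ < t ⟨(y:ℕ) - fval a i + 1, by have := y.isLt; omega⟩ :=
            ht (Fin.mk_lt_mk.mpr (by omega))
      · rw [huval2 x (by omega)]
        exact ht (Fin.mk_lt_mk.mpr (by omega))
  refine ⟨u, hmono, ?_⟩
  refine ⟨fun ℓ => if ℓ = 0 then 0 else if ℓ = 1 then fval a i - 1
    else fval a i + (gval a i - 1) - 1, ?_, by simp, by norm_num, ?_⟩
  · intro x y hxy
    simp only
    split_ifs <;> omega
  · intro ℓ s' hℓ hjs hsj hs' hs1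
    interval_cases ℓ
    · -- increasing part
      norm_num at hsj ⊢
      have hx : s' < fval a i := by omega
      have hx1 : s' + 1 < fval a i := by omega
      rw [huval ⟨s', hs'⟩ hx, huval ⟨s' + 1, hs1⟩ hx1]
      exact has (Fin.mk_lt_mk.mpr (by omega) : (⟨s', hx⟩ : Fin (fval a i)) < ⟨s'+1, hx1⟩)
    · -- decreasing part
      norm_num at hjs hsj ⊢
      rcases lt_or_ge s' (fval a i) with hx | hx
      · have hx1 : ¬ s' + 1 < fval a i := by omega
        have hq2 : 1 < gval a i := by omega
        have e2 : u ⟨s', hs'⟩ = i := by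
          rw [huval ⟨s', hs'⟩ hx]
          refine (congrArg s (Fin.ext ?_)).trans hend
          show s' = fval a i - 1
          omega
        have e4 : u ⟨s' + 1, hs1⟩ = t ⟨1, hq2⟩ := by
          rw [huval2 ⟨s' + 1, hs1⟩ hx1]
          refine congrArg t (Fin.ext ?_)
          show s' + 1 - fval a i + 1 = 1
          omega
        have h5 := hat (show (⟨0, hq⟩ : Fin (gval a i)) < ⟨1, hq2⟩ from
          Fin.mk_lt_mk.mpr Nat.one_pos)
        simp only [Function.comp_apply, hstart] at h5
        rw [e2, e4]
        exact h5
      · have h6 : s' - fval a i + 1 < gval a i := by omega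
        have h7 : s' - fval a i + 2 < gval a i := by omega
        have e5 : u ⟨s', hs'⟩ = t ⟨s' - fval a i + 1, h6⟩ := by
          rw [huval2 ⟨s', hs'⟩ (show ¬ s' < fval a i by omega)]
        have e6 : u ⟨s' + 1, hs1⟩ = t ⟨s' - fval a i + 2, h7⟩ := by
          rw [huval2 ⟨s' + 1, hs1⟩ (show ¬ s' + 1 < fval a i by omega)]
          refine congrArg t (Fin.ext ?_)
          show s' + 1 - fval a i + 1 = s' - fval a i + 2
          omega
        have h8 := hat (show (⟨s' - fval a i + 1, h6⟩ : Fin (gval a i)) <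
            ⟨s' - fval a i + 2, h7⟩ from Fin.mk_lt_mk.mpr (by omega))
        simp only [Function.comp_apply] at h8
        rw [e5, e6]
        exact h8

/-- If `N` is the maximum length of an increasing-first 1-modal subsequence of a permutation of
`[n]` (`n ≥ 1`), then `2n ≤ N(N+1)`. -/
theorem stmt1 (n : ℕ) (hn : 1 ≤ n) (a : Fin n → ℤ) (ha : IsPermOn n a) (N : ℕ)
    (hN : IsGreatest {L : ℕ | ∃ s : Fin L → Fin n, StrictMono s ∧ IncFirstModal 1 (a ∘ s)} N) :
    2 * n ≤ N * (N + 1) := by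
  classical
  have hinj : ∀ i : Fin n, fval a i + gval a i - 1 ≤ N := by
    intro i
    obtain ⟨u, hu, hmod⟩ := combine a i
    exact hN.2 ⟨u, hu, hmod⟩
  set F : Fin n → ℕ × ℕ := fun i => (fval a i - 1, gval a i - 1) with hF
  set T : Finset (ℕ × ℕ) :=
    (Finset.range N).biUnion (fun k => Finset.HasAntidiagonal.antidiagonal k) with hT
  have hmem : ∀ i : Fin n, F i ∈ T := by
    intro i
    have h1 := one_le_fval a i
    have h2 := one_le_gval a i
    have h3 := hinj i
    have hk : fval a i + gval a i - 2 < N := by omega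
    have he : (F i).1 + (F i).2 = fval a i + gval a i - 2 := by
      simp only [hF]; omega
    simp only [hT, Finset.mem_biUnion, Finset.mem_range, Finset.HasAntidiagonal.mem_antidiagonal]
    exact ⟨fval a i + gval a i - 2, hk, he⟩
  have hFinj : Function.Injective F := by
    intro i j hij
    by_contra hne
    have hane : a i ≠ a j := fun h => hne (ha.1 h)
    have h1i := one_le_fval a i; have h1j := one_le_fval a j
    have h2i := one_le_gval a i; have h2j := one_le_gval a j
    have hfij : fval a i = fval a j := by
      have := congrArg Prod.fst hij; simp only [hF] at this; omega
    have hgij : gval a i = gval a j := by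
      have := congrArg Prod.snd hij; simp only [hF] at this; omega
    rcases lt_trichotomy i j with h | h | h
    · rcases lt_or_gt_of_ne hane with hh | hh
      · have := inc_extend a h hh; omega
      · have := dec_extend a h hh; omega
    · exact hne h
    · rcases lt_or_gt_of_ne hane with hh | hh
      · have := dec_extend a h hh; omega
      · have := inc_extend a h hh; omega
  have hcard : n ≤ T.card := by
    have := Finset.card_le_card_of_injOn (s := Finset.univ) F (fun x _ => hmem x)
      (hFinj.injOn)
    simpa using this
  have hTcard : T.card = ∑ k ∈ Finset.range N, (k + 1) := by
    rw [hT, Finset.card_biUnion]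
    · simp [Finset.Nat.card_antidiagonal]
    · intro x _ y _ hxy
      simp only [Finset.disjoint_left]
      intro p hp hq
      rw [Finset.HasAntidiagonal.mem_antidiagonal] at hp hq
      exact hxy (hp ▸ hq ▸ rfl)
  have h1 : ∑ k ∈ Finset.range (N + 1), k = ∑ k ∈ Finset.range N, (k + 1) := by
    rw [Finset.sum_range_succ']; simp
  have h2 := Finset.sum_range_id_mul_two (N + 1)
  have final : 2 * T.card = N * (N + 1) := by
    rw [hTcard, ← h1, mul_comm, h2, mul_comm]
    simp
  exact le_trans (by omega) (le_of_eq final)
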